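/- For LRRW with parameter a on a graph G, the probability of a finite path γ starting at x₀ factors as follows: for each undirected edge e traversed q times by γ, the numerators contribute the product a(a+1)⋯(a+q−1); and for each vertex v ≠ x₀ appearing r times among γ_0,…,γ_{l−1}, the denominators contribute the product (a·deg v + 1)(a·deg v + 3)⋯(a·deg v + 2r−1), while x₀ appearing r times contributes (a·deg x₀)(a·deg x₀ + 2)⋯(a·deg x₀ + 2r−2). Hence p(γ) is determined by the traversal counts N_γ(e,l) alone. -/

import Mathlib

/-- `ntrav γ t e` is the number of traversals `N(e,t)` of the undirected edge
`e` by the walk `γ` during the first `t` steps, counting both directions. -/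
def ntrav {V : Type*} [DecidableEq V] (γ : ℕ → V) (t : ℕ) (e : Sym2 V) : ℕ :=
  ((Finset.range t).filter (fun s => s(γ s, γ (s+1)) = e)).card

/-- The probability that the reinforced random walk with reinforcement
function `f` on the locally finite graph `G` begins with the first `l` steps
of the walk `γ`: the product over each step of
`f(N((γ_i,γ_{i+1}),i))` normalized over the neighbours of `γ_i`. -/
noncomputable def pathProb {V : Type*} [DecidableEq V] (G : SimpleGraph V)
    [∀ v : V, Fintype (G.neighborSet v)] (f : ℕ → ℝ) (γ : ℕ → V) (l : ℕ) : ℝ :=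
  ∏ i ∈ Finset.range l,
    f (ntrav γ i s(γ i, γ (i+1))) /
      ∑ z ∈ G.neighborFinset (γ i), f (ntrav γ i s(γ i, z))

open Finset

-- grouping lemma
lemma prod_group' {α : Type*} [DecidableEq α] (g : ℕ → α) (F : α → ℕ → ℝ) (l : ℕ) :
    ∏ i ∈ range l, F (g i) (((range i).filter (fun s => g s = g i)).card)
      = ∏ x ∈ (range l).image g,
          ∏ j ∈ range (((range l).filter (fun i => g i = x)).card), F x j := by
  induction l with
  | zero => simp
  | succ l ih =>
    have hcount : ∀ x, ((range (l+1)).filter (fun i => g i = x)).card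
        = ((range l).filter (fun i => g i = x)).card + (if g l = x then 1 else 0) := by
      intro x
      rw [range_add_one, filter_insert]
      split
      · rw [card_insert_of_notMem (fun h => by simpa using (mem_filter.mp h).1)]
      · simp
    rw [prod_range_succ, ih,
      show (range (l+1)).image g = insert (g l) ((range l).image g) from by
        rw [range_add_one, image_insert]]
    by_cases hm : g l ∈ (range l).image g
    · rw [insert_eq_self.mpr hm]
      have key : ∀ x ∈ (range l).image g,
          ∏ j ∈ range (((range (l+1)).filter (fun i => g i = x)).card), F x j
          = (∏ j ∈ range (((range l).filter (fun i => g i = x)).card), F x j)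
            * (if g l = x then F x (((range l).filter (fun i => g i = x)).card) else 1) := by
        intro x _
        rw [hcount x]
        split
        · rw [prod_range_succ]
        · simp
      rw [prod_congr rfl key, prod_mul_distrib, prod_ite_eq, if_pos hm]
    · rw [prod_insert hm]
      have hz : ((range l).filter (fun i => g i = g l)).card = 0 := by
        rw [card_eq_zero, filter_eq_empty_iff]
        intro i hi h
        exact hm (mem_image.mpr ⟨i, hi, h⟩)
      have h1 : ((range (l+1)).filter (fun i => g i = g l)).card = 1 := by
        rw [hcount, hz]; simp
      have h2 : ∀ x ∈ (range l).image g,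
          ∏ j ∈ range (((range (l+1)).filter (fun i => g i = x)).card), F x j
          = ∏ j ∈ range (((range l).filter (fun i => g i = x)).card), F x j := by
        intro x hx
        rw [hcount]
        have hne : g l ≠ x := fun h => hm (h ▸ hx)
        simp [hne]
      rw [h1, prod_congr rfl h2, prod_range_one, hz, mul_comm]

lemma shift_count' {V : Type*} [DecidableEq V] (γ : ℕ → V) (v : V) (i : ℕ) :
    ((range i).filter (fun s => γ (s+1) = v)).card + (if γ 0 = v then 1 else 0)
      = ((range i).filter (fun s => γ s = v)).card + (if γ i = v then 1 else 0) := by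
  induction i with
  | zero => simp
  | succ i ih =>
    have e1 : ((range (i+1)).filter (fun s => γ (s+1) = v)).card
        = ((range i).filter (fun s => γ (s+1) = v)).card + (if γ (i+1) = v then 1 else 0) := by
      rw [range_add_one, filter_insert]
      split
      · rw [card_insert_of_notMem (fun h => by simpa using (mem_filter.mp h).1)]
      · simp
    have e2 : ((range (i+1)).filter (fun s => γ s = v)).card
        = ((range i).filter (fun s => γ s = v)).card + (if γ i = v then 1 else 0) := by
      rw [range_add_one, filter_insert]
      split
      · rw [card_insert_of_notMem (fun h => by simpa using (mem_filter.mp h).1)]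
      · simp
    rw [e1, e2]
    split_ifs at ih ⊢ <;> omega

lemma step_sum' {V : Type*} [DecidableEq V] (G : SimpleGraph V)
    [∀ v : V, Fintype (G.neighborSet v)]
    (γ : ℕ → V) (v : V) (s : ℕ) (h : G.Adj (γ s) (γ (s+1))) :
    ∑ z ∈ G.neighborFinset v, (if s(γ s, γ (s+1)) = s(v, z) then (1:ℕ) else 0)
      = (if γ s = v then 1 else 0) + (if γ (s+1) = v then 1 else 0) := by
  by_cases h1 : γ s = v
  · have h2 : γ (s+1) ≠ v := by intro hv; rw [h1, hv] at h; exact G.irrefl h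
    have hiff : ∀ z, (s(γ s, γ (s+1)) = s(v, z)) ↔ z = γ (s+1) := by
      intro z
      rw [Sym2.eq_iff]
      constructor
      · rintro (⟨-, rfl⟩ | ⟨rfl, hb⟩)
        · rfl
        · exact absurd hb h2
      · rintro rfl
        exact Or.inl ⟨h1, rfl⟩
    simp only [hiff]
    rw [Finset.sum_ite_eq' (G.neighborFinset v) (γ (s+1)) (fun _ => (1:ℕ))]
    rw [if_pos (by rw [SimpleGraph.mem_neighborFinset]; exact h1 ▸ h)]
    simp [h1, h2]
  · by_cases h2 : γ (s+1) = v
    · have hiff : ∀ z, (s(γ s, γ (s+1)) = s(v, z)) ↔ z = γ s := by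
        intro z
        rw [Sym2.eq_iff]
        constructor
        · rintro (⟨ha, -⟩ | ⟨rfl, -⟩)
          · exact absurd ha h1
          · rfl
        · rintro rfl
          exact Or.inr ⟨rfl, h2⟩
      simp only [hiff]
      rw [Finset.sum_ite_eq' (G.neighborFinset v) (γ s) (fun _ => (1:ℕ))]
      rw [if_pos (by rw [SimpleGraph.mem_neighborFinset]; exact h2 ▸ h.symm)]
      simp [h1, h2]
    · have : ∀ z, ¬ (s(γ s, γ (s+1)) = s(v, z)) := by
        intro z hz
        rw [Sym2.eq_iff] at hz
        rcases hz with ⟨ha, -⟩ | ⟨-, hb⟩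
        · exact h1 ha
        · exact h2 hb
      simp [this, h1, h2]

lemma denom_eq' {V : Type*} [DecidableEq V] (G : SimpleGraph V)
    [∀ v : V, Fintype (G.neighborSet v)] (a : ℝ) (x₀ : V) (γ : ℕ → V) (l i : ℕ)
    (hil : i < l) (h0 : γ 0 = x₀) (hadj : ∀ s < l, G.Adj (γ s) (γ (s+1))) :
    ∑ z ∈ G.neighborFinset (γ i), (a + (ntrav γ i s(γ i, z) : ℝ))
      = a * (G.degree (γ i) : ℝ)
        + 2 * (((range i).filter (fun s => γ s = γ i)).card : ℝ)
        + (if γ i = x₀ then 0 else 1) := by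
  set v := γ i with hv
  have hT : ∑ z ∈ G.neighborFinset v, ntrav γ i s(v, z)
      = ((range i).filter (fun s => γ s = v)).card
        + ((range i).filter (fun s => γ (s+1) = v)).card := by
    simp only [ntrav, card_filter]
    rw [Finset.sum_comm]
    have key : ∀ s ∈ range i,
        ∑ z ∈ G.neighborFinset v, (if s(γ s, γ (s+1)) = s(v, z) then (1:ℕ) else 0)
        = (if γ s = v then 1 else 0) + (if γ (s+1) = v then 1 else 0) :=
      fun s hs => step_sum' G γ v s (hadj s (lt_trans (mem_range.mp hs) hil))
    rw [sum_congr rfl key, sum_add_distrib]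
  have hshift := shift_count' γ v i
  rw [sum_add_distrib, sum_const, ← Nat.cast_sum]
  rw [hT]
  have hdeg : (G.neighborFinset v).card = G.degree v := rfl
  rw [hdeg]
  set c1 := ((range i).filter (fun s => γ s = v)).card
  set c2 := ((range i).filter (fun s => γ (s+1) = v)).card
  by_cases hx : v = x₀
  · have hg0 : γ 0 = v := by rw [h0, hx]
    rw [if_pos hg0, if_pos (hv ▸ rfl : γ i = v)] at hshift
    have : c2 = c1 := by omega
    rw [if_pos hx, this]
    push_cast
    ring
  · have hg0 : γ 0 ≠ v := by rw [h0]; exact fun h => hx h.symm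
    rw [if_neg hg0, if_pos (hv ▸ rfl : γ i = v)] at hshift
    have : c2 = c1 + 1 := by omega
    rw [if_neg hx, this]
    push_cast
    ring

/-- Explicit product formula for the probability of a path `γ` of length `l`
under LRRW with parameter `a`: each undirected edge `e` traversed `q` times
contributes numerators `a(a+1)⋯(a+q-1)`; each vertex `v ≠ x₀` appearing `r`
times among `γ_0,…,γ_{l-1}` contributes denominators
`(a·deg v + 1)(a·deg v + 3)⋯(a·deg v + 2r - 1)`, while `x₀` appearing `r`
times contributes `(a·deg x₀)(a·deg x₀ + 2)⋯(a·deg x₀ + 2r - 2)`.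
Hence `p(γ)` is determined by the traversal counts alone. -/
theorem lrrw_path_probability_formula {V : Type*} [DecidableEq V]
    (G : SimpleGraph V) [∀ v : V, Fintype (G.neighborSet v)]
    (a : ℝ) (ha : 0 < a) (x₀ : V) (γ : ℕ → V) (l : ℕ)
    (h0 : γ 0 = x₀)
    (hadj : ∀ i < l, G.Adj (γ i) (γ (i+1))) :
    pathProb G (fun n => a + (n : ℝ)) γ l
      = (∏ e ∈ (Finset.range l).image (fun i => s(γ i, γ (i+1))),
            ∏ j ∈ Finset.range (ntrav γ l e), (a + (j : ℝ)))
        / ∏ v ∈ (Finset.range l).image γ,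
            (if v = x₀ then
              ∏ j ∈ Finset.range (((Finset.range l).filter (fun i => γ i = v)).card),
                (a * (G.degree v : ℝ) + 2 * (j : ℝ))
            else
              ∏ j ∈ Finset.range (((Finset.range l).filter (fun i => γ i = v)).card),
                (a * (G.degree v : ℝ) + 2 * (j : ℝ) + 1)) := by
  unfold pathProb
  rw [prod_div_distrib]
  congr 1
  · -- numerator
    have := prod_group' (fun i => s(γ i, γ (i+1))) (fun e n => a + (n : ℝ)) l
    simp only [ntrav]
    exact this
  · -- denominator
    have step : ∀ i ∈ range l,
        ∑ z ∈ G.neighborFinset (γ i), (a + (ntrav γ i s(γ i, z) : ℝ))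
        = (fun v n => a * (G.degree v : ℝ) + 2 * (n : ℝ) + (if v = x₀ then 0 else 1)) (γ i)
            (((range i).filter (fun s => γ s = γ i)).card) :=
      fun i hi => denom_eq' G a x₀ γ l i (mem_range.mp hi) h0 hadj
    rw [prod_congr rfl step,
      prod_group' γ (fun v n => a * (G.degree v : ℝ) + 2 * (n : ℝ) + (if v = x₀ then 0 else 1)) l]
    refine prod_congr rfl fun v _ => ?_
    by_cases hx : v = x₀
    · simp [hx]
    · simp [hx]
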